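/- Let A be a K-algebra over a field K of characteristic zero with elements x, y satisfying x*y − y*x = x, and define w_k = x*y^k − y^k*x. Then for every k ≥ 1: y * w_k = (k/(k+1)) · w_{k+1} − (1/(k+1)) · ∑_{i=1}^{k} C(k+1,i) · B_{k+1−i} · w_i. -/

import Mathlib

open Polynomial Finset

private lemma eval_sum_bern (n : ℕ) (s : ℚ) :
    ∑ i ∈ range (n + 1), (n.choose i : ℚ) * bernoulli' (n - i) * s ^ i
      = (-1) ^ n * (Polynomial.bernoulli n).eval (-s) := by
  rw [Polynomial.bernoulli_def, Polynomial.eval_finset_sum, Finset.mul_sum]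
  refine Finset.sum_congr rfl fun i hi => ?_
  rw [Finset.mem_range, Nat.lt_succ_iff] at hi
  rw [Polynomial.eval_monomial, bernoulli'_eq_bernoulli, neg_pow]
  have hpow : (-1 : ℚ) ^ (n - i) = (-1) ^ n * (-1) ^ i := by
    rw [← pow_add, show n + i = (n - i) + 2 * i by omega, pow_add, pow_mul]
    norm_num
  rw [hpow]
  ring

private lemma scalar_key (m : ℕ) (t : ℚ) :
    ∑ i ∈ range (m + 2), ((m + 1).choose i : ℚ) * bernoulli' (m + 1 - i) * ((t + 1) ^ i - t ^ i)
      = ((m : ℚ) + 1) * (t + 1) ^ m := by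
  have h1 := eval_sum_bern (m + 1) (t + 1)
  have h2 := eval_sum_bern (m + 1) t
  have heval := Polynomial.bernoulli_eval_one_add (m + 1) (-(t + 1))
  rw [show (1 : ℚ) + -(t + 1) = -t by ring, Nat.add_sub_cancel, neg_pow] at heval
  have hone : (-1 : ℚ) ^ m * (-1 : ℚ) ^ m = 1 := by
    rw [← pow_add]; exact Even.neg_one_pow ⟨m, rfl⟩
  simp_rw [mul_sub]
  rw [Finset.sum_sub_distrib, h1, h2, heval, pow_succ]
  push_cast
  linear_combination (((m : ℚ) + 1) * (t + 1) ^ m) * hone +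
    ((-1 : ℚ) ^ m * (-1)) * h2 - ((-1 : ℚ) ^ m * (-1)) * h2

private lemma poly_key (m : ℕ) :
    ∑ i ∈ range (m + 2),
        C (((m + 1).choose i : ℚ) * bernoulli' (m + 1 - i)) * ((X + 1) ^ i - X ^ i)
      = C ((m : ℚ) + 1) * (X + 1) ^ m := by
  apply Polynomial.funext
  intro t
  simp only [eval_finset_sum, eval_mul, eval_C, eval_sub, eval_pow, eval_add, eval_one, eval_X]
  simpa [mul_assoc] using scalar_key m t

private lemma poly_main (k : ℕ) :
    (X : ℚ[X]) * ((X + 1) ^ k - X ^ k) =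
      C ((k : ℚ) / (k + 1)) * ((X + 1) ^ (k + 1) - X ^ (k + 1)) -
      C ((1 : ℚ) / (k + 1)) * ∑ i ∈ Icc 1 k,
        C (((k + 1).choose i : ℚ) * bernoulli' (k + 1 - i)) * ((X + 1) ^ i - X ^ i) := by
  have hS : (∑ i ∈ Icc 1 k,
      C (((k + 1).choose i : ℚ) * bernoulli' (k + 1 - i)) * ((X + 1) ^ i - X ^ i))
      = C ((k : ℚ) + 1) * (X + 1) ^ k - ((X + 1) ^ (k + 1) - X ^ (k + 1)) := by
    have h := poly_key k
    rw [Finset.sum_range_succ, Finset.sum_range_succ'] at h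
    simp only [Nat.sub_self, bernoulli'_zero, Nat.choose_self, Nat.cast_one, mul_one, one_mul,
      map_one, pow_zero, sub_self, mul_zero, add_zero] at h
    rw [← Finset.Ico_add_one_right_eq_Icc, Finset.sum_Ico_eq_sum_range]
    simp only [Nat.add_sub_cancel]
    have hcong : ∀ i ∈ range k, C (((k + 1).choose (1 + i) : ℚ) * bernoulli' (k + 1 - (1 + i))) *
        ((X + 1) ^ (1 + i) - X ^ (1 + i)) =
        C (((k + 1).choose (i + 1) : ℚ) * bernoulli' (k + 1 - (i + 1))) *
        ((X + 1) ^ (i + 1) - X ^ (i + 1)) := by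
      intro i _; rw [add_comm 1 i]
    rw [Finset.sum_congr rfl hcong]
    linear_combination h
  have ha : ((k : ℚ) + 1) ≠ 0 := by positivity
  have hC : (C ((k : ℚ) + 1)) ≠ 0 := Polynomial.C_ne_zero.mpr ha
  have e1 : C ((k : ℚ) + 1) * C ((k : ℚ) / ((k : ℚ) + 1)) = C (k : ℚ) := by
    rw [← C_mul]; congr 1; field_simp
  have e2 : C ((k : ℚ) + 1) * C ((1 : ℚ) / ((k : ℚ) + 1)) = 1 := by
    rw [← C_mul, mul_one_div, div_self ha, map_one]
  have e3 : (C ((k : ℚ) + 1)) = C (k : ℚ) + 1 := by rw [map_add, map_one]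
  apply mul_left_cancel₀ hC
  rw [e3] at e1 e2
  rw [hS, e3]
  linear_combination (-((X + 1) ^ (k + 1) - X ^ (k + 1)) : ℚ[X]) * e1 +
    ((C (k : ℚ) + 1) * (X + 1) ^ k - ((X + 1) ^ (k + 1) - X ^ (k + 1))) * e2

theorem y_mul_wk (K : Type*) (A : Type*) [Field K] [CharZero K] [Ring A] [Algebra K A]
    (x y : A) (h : x * y - y * x = x) (k : ℕ) (hk : 1 ≤ k) :
    y * (x * y ^ k - y ^ k * x) =
      ((k : K) / (k + 1)) • (x * y ^ (k + 1) - y ^ (k + 1) * x) -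
      ((1 : K) / (k + 1)) • ∑ i ∈ Finset.Icc 1 k,
        (((k + 1).choose i : K) * algebraMap ℚ K (bernoulli' (k + 1 - i))) •
          (x * y ^ i - y ^ i * x) := by
  have hxy : x * y = (y + 1) * x := by
    rw [add_mul, one_mul]
    rw [sub_eq_iff_eq_add] at h
    rw [h, add_comm]
  have hx : ∀ n : ℕ, x * y ^ n = (y + 1) ^ n * x := by
    intro n
    induction n with
    | zero => simp
    | succ n ih =>
      rw [pow_succ, ← mul_assoc, ih, mul_assoc, hxy, ← mul_assoc, ← pow_succ]
  -- the evaluation map ℚ[X] → A, X ↦ y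
  set E : ℚ[X] →+* A :=
    ((Polynomial.aeval y : K[X] →ₐ[K] A) : K[X] →+* A).comp
      (Polynomial.mapRingHom (algebraMap ℚ K)) with hE
  have hEX : E X = y := by simp [hE]
  have hEC : ∀ c : ℚ, E (C c) = algebraMap K A (algebraMap ℚ K c) := by
    intro c; simp [hE]
  have hW : ∀ n : ℕ, x * y ^ n - y ^ n * x = E ((X + 1) ^ n - X ^ n) * x := by
    intro n
    rw [hx n]
    simp only [map_sub, map_pow, map_add, map_one, hEX, sub_mul]
  have hsmul : ∀ (c : ℚ) (p : ℚ[X]),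
      algebraMap ℚ K c • (E p * x) = E (C c * p) * x := by
    intro c p
    rw [map_mul, hEC, Algebra.smul_def, mul_assoc]
  have key := congrArg E (poly_main k)
  rw [map_mul, hEX] at key
  -- rewrite goal
  rw [hW k, hW (k + 1)]
  have hsum : (∑ i ∈ Finset.Icc 1 k,
      (((k + 1).choose i : K) * algebraMap ℚ K (bernoulli' (k + 1 - i))) •
        (x * y ^ i - y ^ i * x))
      = E (∑ i ∈ Icc 1 k,
          C (((k + 1).choose i : ℚ) * bernoulli' (k + 1 - i)) * ((X + 1) ^ i - X ^ i)) * x := by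
    rw [map_sum, Finset.sum_mul]
    refine Finset.sum_congr rfl fun i _ => ?_
    rw [hW i]
    have : (((k + 1).choose i : K) * algebraMap ℚ K (bernoulli' (k + 1 - i)))
        = algebraMap ℚ K (((k + 1).choose i : ℚ) * bernoulli' (k + 1 - i)) := by
      rw [map_mul, map_natCast]
    rw [this, hsmul]
  rw [hsum]
  have hc1 : ((k : K) / (k + 1)) = algebraMap ℚ K ((k : ℚ) / ((k : ℚ) + 1)) := by
    rw [map_div₀, map_natCast, map_add, map_natCast, map_one]
  have hc2 : ((1 : K) / (k + 1)) = algebraMap ℚ K ((1 : ℚ) / ((k : ℚ) + 1)) := by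
    rw [map_div₀, map_one, map_add, map_natCast, map_one]
  rw [hc1, hc2, hsmul, hsmul, ← sub_mul, ← map_sub, ← mul_assoc, key]
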